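/- If α, β > 0 satisfy f_s(0,α) = 0 and f_d(0,α,β) = 0, then α = 1/√(1−a²) − 1/2 and β = 4 + √(1−2a²)·(1 − 4/√(1−a²)), and moreover f_s(u,α) ≤ 0 and f_d(u,α,β) ≤ 0 for all u ∈ [−1,1]. -/

import Mathlib

noncomputable section

open Real Set

/-- A vector in Euclidean 3-space. -/
def v3 (x y z : ℝ) : EuclideanSpace ℝ (Fin 3) := !₂[x, y, z]

/-- Quadratic Bernstein polynomials (parametrized on `[-1,1]`). -/
def bern (i : Fin 3) (u : ℝ) : ℝ :=
  (Nat.choose 2 (i : ℕ)) * ((1 + u) / 2) ^ (i : ℕ) * ((1 - u) / 2) ^ (2 - (i : ℕ))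

/-- Control points `ctrl a α β i j = b i j` of the tensor product quadratic Bézier patch:
`b₀₀ = (-a,-a,√(1-2a²))`, `b₂₀ = (a,-a,√(1-2a²))`, `b₀₂ = (-a,a,√(1-2a²))`,
`b₂₂ = (a,a,√(1-2a²))`, `b₁₀ = α(b₀₀+b₂₀)`, `b₀₁ = α(b₀₀+b₀₂)`, `b₂₁ = α(b₂₀+b₂₂)`,
`b₁₂ = α(b₀₂+b₂₂)`, `b₁₁ = β(0,0,1)`. The first index is the `u`-index. -/
def ctrl (a α β : ℝ) : Fin 3 → Fin 3 → EuclideanSpace ℝ (Fin 3) :=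
  ![![v3 (-a) (-a) (Real.sqrt (1 - 2*a^2)),
     α • (v3 (-a) (-a) (Real.sqrt (1 - 2*a^2)) + v3 (-a) a (Real.sqrt (1 - 2*a^2))),
     v3 (-a) a (Real.sqrt (1 - 2*a^2))],
    ![α • (v3 (-a) (-a) (Real.sqrt (1 - 2*a^2)) + v3 a (-a) (Real.sqrt (1 - 2*a^2))),
     β • v3 0 0 1,
     α • (v3 (-a) a (Real.sqrt (1 - 2*a^2)) + v3 a a (Real.sqrt (1 - 2*a^2)))],
    ![v3 a (-a) (Real.sqrt (1 - 2*a^2)),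
     α • (v3 a (-a) (Real.sqrt (1 - 2*a^2)) + v3 a a (Real.sqrt (1 - 2*a^2))),
     v3 a a (Real.sqrt (1 - 2*a^2))]]

/-- The tensor product quadratic Bézier patch
`p(u,v) = ∑ᵢ ∑ⱼ Bᵢ²(u) Bⱼ²(v) bᵢⱼ`. -/
def bez (a α β u v : ℝ) : EuclideanSpace ℝ (Fin 3) :=
  ∑ i : Fin 3, ∑ j : Fin 3, (bern i u * bern j v) • ctrl a α β i j

/-- The simplified radial error `f(u,v,α,β) = ‖p(u,v)‖² - 1`. -/
def f (a α β u v : ℝ) : ℝ := ‖bez a α β u v‖ ^ 2 - 1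

/-- `f_s(u,α) = f(u,-1,α,β)`; this does not depend on `β` (the control point `b₁₁`
does not contribute on the side `v = -1`), so we take `β = 0`. -/
def fs (a α u : ℝ) : ℝ := f a α 0 u (-1)

/-- `f_d(u,α,β) = f(u,u,α,β)`, the error along the diagonal. -/
def fd (a α β u : ℝ) : ℝ := f a α β u u


lemma norm3 (x : EuclideanSpace ℝ (Fin 3)) : ‖x‖^2 = (x 0)^2 + (x 1)^2 + (x 2)^2 := by
  rw [EuclideanSpace.norm_eq, Real.sq_sqrt (by positivity)]
  simp [Fin.sum_univ_three, sq]

lemma bez_apply (a α β u v : ℝ) (k : Fin 3) :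
    bez a α β u v k = ∑ i : Fin 3, ∑ j : Fin 3, bern i u * bern j v * ctrl a α β i j k := by
  rw [bez]
  rw [WithLp.ofLp_sum, Finset.sum_apply]
  refine Finset.sum_congr rfl fun i _ => ?_
  rw [WithLp.ofLp_sum, Finset.sum_apply]
  refine Finset.sum_congr rfl fun j _ => ?_
  rfl

lemma bern0 (u : ℝ) : bern 0 u = (1-u)^2/4 := by simp [bern]; ring
lemma bern1 (u : ℝ) : bern 1 u = (1+u)*(1-u)/2 := by simp [bern]; ring
lemma bern2 (u : ℝ) : bern 2 u = (1+u)^2/4 := by simp [bern]; ring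

set_option maxHeartbeats 1000000 in
lemma bez0 (a α β u v : ℝ) :
    bez a α β u v 0 =
      bern 0 u * bern 0 v * (-a) + bern 0 u * bern 1 v * (α * (-a + -a))
      + bern 0 u * bern 2 v * (-a)
      + bern 1 u * bern 0 v * (α * (-a + a)) + bern 1 u * bern 1 v * (β * 0)
      + bern 1 u * bern 2 v * (α * (-a + a))
      + bern 2 u * bern 0 v * a + bern 2 u * bern 1 v * (α * (a + a))
      + bern 2 u * bern 2 v * a := by
  rw [bez_apply]
  simp [Fin.sum_univ_three, ctrl, v3, PiLp.smul_apply, PiLp.add_apply, smul_eq_mul]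
  ring

set_option maxHeartbeats 1000000 in
lemma bez1 (a α β u v : ℝ) :
    bez a α β u v 1 =
      bern 0 u * bern 0 v * (-a) + bern 0 u * bern 1 v * (α * (-a + a))
      + bern 0 u * bern 2 v * a
      + bern 1 u * bern 0 v * (α * (-a + -a)) + bern 1 u * bern 1 v * (β * 0)
      + bern 1 u * bern 2 v * (α * (a + a))
      + bern 2 u * bern 0 v * (-a) + bern 2 u * bern 1 v * (α * (-a + a))
      + bern 2 u * bern 2 v * a := by
  rw [bez_apply]
  simp [Fin.sum_univ_three, ctrl, v3, PiLp.smul_apply, PiLp.add_apply, smul_eq_mul]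
  ring

set_option maxHeartbeats 1000000 in
lemma bez2 (a α β u v : ℝ) :
    bez a α β u v 2 =
      bern 0 u * bern 0 v * Real.sqrt (1-2*a^2)
      + bern 0 u * bern 1 v * (α * (2 * Real.sqrt (1-2*a^2)))
      + bern 0 u * bern 2 v * Real.sqrt (1-2*a^2)
      + bern 1 u * bern 0 v * (α * (2 * Real.sqrt (1-2*a^2))) + bern 1 u * bern 1 v * (β * 1)
      + bern 1 u * bern 2 v * (α * (2 * Real.sqrt (1-2*a^2)))
      + bern 2 u * bern 0 v * Real.sqrt (1-2*a^2)
      + bern 2 u * bern 1 v * (α * (2 * Real.sqrt (1-2*a^2)))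
      + bern 2 u * bern 2 v * Real.sqrt (1-2*a^2) := by
  rw [bez_apply]
  simp [Fin.sum_univ_three, ctrl, v3, PiLp.smul_apply, PiLp.add_apply, smul_eq_mul]
  ring

lemma fs_eq (a al u : ℝ) :
    fs a al u = a^2*u^2 + (a^2 + (Real.sqrt (1-2*a^2))^2)
      * ((1+u^2)/2 + al*(1-u^2))^2 - 1 := by
  rw [fs, f, norm3, bez0, bez1, bez2]
  simp only [bern0, bern1, bern2]
  ring

lemma fd_eq (a al be u : ℝ) :
    fd a al be u = 2*a^2*u^2*((1+u^2)/2 + al*(1-u^2))^2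
      + (Real.sqrt (1-2*a^2) * ((1+u^2)^2/4 + al*(1-u^4)) + be*(1-u^2)^2/4)^2 - 1 := by
  rw [fd, f, norm3, bez0, bez1, bez2]
  simp only [bern0, bern1, bern2]
  ring

lemma hRpos (s : ℝ) (h1 : 1/2 ≤ s^2) (h2 : s ≤ 1) (h0 : 0 < s) :
    0 ≤ -s^4+4*s^3-s^2-2*s+1 := by
  nlinarith [sq_nonneg (1-s), sq_nonneg s, mul_pos h0 h0, sq_nonneg (s^2-s),
    mul_nonneg (sq_nonneg (1-s)) h0.le, mul_nonneg (mul_nonneg (sub_nonneg.2 h2) h0.le) h0.le]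

lemma hGpos (s : ℝ) (h1 : 1/2 ≤ s^2) (h2 : s ≤ 1) (h0 : 0 < s) :
    0 ≤ s^6-6*s^5+3*s^4+8*s^3-3*s^2-2*s+1 := by
  nlinarith [sq_nonneg (1-s), sq_nonneg s, mul_nonneg (sub_nonneg.2 h2) h0.le,
    mul_nonneg (mul_nonneg (sub_nonneg.2 h2) h0.le) h0.le,
    mul_nonneg (sq_nonneg (1-s)) h0.le,
    mul_nonneg (mul_nonneg (sq_nonneg (1-s)) h0.le) h0.le, sq_nonneg (s^2-s),
    sq_nonneg (s^3-s^2), mul_nonneg (sub_nonneg.2 h1) (sq_nonneg (1-s))]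

lemma q2_le (s c : ℝ) (hshalf : 1/2 ≤ s^2) (hs1 : s ≤ 1) (hs0 : 0 < s)
    (hc0 : 0 ≤ c) (hcs : c^2 = 2*s^2 - 1) :
    (-4 + 4*s - 4*s*c + 8*s^2 + 2*s^2*c - 8*s^3 + 2*s^4 : ℝ) ≤ 2*(s-c)^2 := by
  have hG := hGpos s hshalf hs1 hs0
  have hR := hRpos s hshalf hs1 hs0
  have hsq : (s^2*c)^2 ≤ (-s^4+4*s^3-s^2-2*s+1)^2 := by
    have e : (s^2*c)^2 = s^4*(2*s^2-1) := by linear_combination s^4*hcs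
    rw [e]
    linarith [mul_nonneg (sq_nonneg (s-1)) hG,
      (by ring : (-s^4+4*s^3-s^2-2*s+1)^2 - s^4*(2*s^2-1) = (s-1)^2*(s^6-6*s^5+3*s^4+8*s^3-3*s^2-2*s+1))]
  have hscR : s^2*c ≤ -s^4+4*s^3-s^2-2*s+1 := by
    nlinarith [hsq, hR, mul_nonneg (mul_nonneg (sq_nonneg s) hc0) hR, mul_nonneg (sq_nonneg s) hc0]
  nlinarith [hscR, hcs]


set_option maxHeartbeats 2000000 in
/-- If `α, β > 0` satisfy `f_s(0,α) = 0` and `f_d(0,α,β) = 0`, then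
`α = 1/√(1-a²) - 1/2`, `β = 4 + √(1-2a²)(1 - 4/√(1-a²))`, and moreover
`f_s(u,α) ≤ 0` and `f_d(u,α,β) ≤ 0` for all `u ∈ [-1,1]`. -/
theorem atpointzero (a : ℝ) (ha : 0 < a) (ha' : a ≤ Real.sqrt 2 / 2)
    (α β : ℝ) (hα : 0 < α) (hβ : 0 < β)
    (hs : fs a α 0 = 0) (hd : fd a α β 0 = 0) :
    α = 1 / Real.sqrt (1 - a^2) - 1/2 ∧
    β = 4 + Real.sqrt (1 - 2*a^2) * (1 - 4 / Real.sqrt (1 - a^2)) ∧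
    ∀ u ∈ Set.Icc (-1:ℝ) 1, fs a α u ≤ 0 ∧ fd a α β u ≤ 0 := by
  have hsqrt2 : (Real.sqrt 2)^2 = 2 := Real.sq_sqrt (by norm_num)
  have ha2 : a^2 ≤ 1/2 := by nlinarith [Real.sqrt_nonneg 2]
  have h2a : (0:ℝ) ≤ 1 - 2*a^2 := by linarith
  have h1a : (0:ℝ) < 1 - a^2 := by nlinarith
  set c := Real.sqrt (1 - 2*a^2) with hcdef
  set s := Real.sqrt (1 - a^2) with hsdef
  have hc2 : c^2 = 1 - 2*a^2 := Real.sq_sqrt h2a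
  have hc0 : 0 ≤ c := Real.sqrt_nonneg _
  have hs2 : s^2 = 1 - a^2 := Real.sq_sqrt h1a.le
  have hs0 : 0 < s := Real.sqrt_pos.2 h1a
  have hs1 : s ≤ 1 := by nlinarith
  have hshalf : 1/2 ≤ s^2 := by rw [hs2]; linarith
  have hac : a^2 + c^2 = s^2 := by linear_combination hc2 - hs2
  -- derive α
  rw [fs_eq, ← hcdef] at hs
  have hs' : (a^2 + c^2) * (1/2 + α)^2 = 1 := by linear_combination hs
  have h1 : (s*(1/2+α) - 1) * (s*(1/2+α) + 1) = 0 := by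
    linear_combination hs' - (1/2 + α)^2 * hac
  have hw : s*(1/2+α) = 1 := by
    rcases mul_eq_zero.1 h1 with h | h
    · linarith
    · nlinarith [mul_pos hs0 hα]
  have hsα : s*α = 1 - s/2 := by linear_combination hw
  have goal1 : α = 1 / s - 1/2 := by
    field_simp
    linear_combination 2*hw
  -- derive β
  rw [fd_eq, ← hcdef] at hd
  have hd' : (c*(1/4+α) + β/4)^2 = 1 := by linear_combination hd
  have h2 : (c*(1/4+α) + β/4 - 1) * (c*(1/4+α) + β/4 + 1) = 0 := by
    linear_combination hd'
  have hw2 : c*(1/4+α) + β/4 = 1 := by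
    rcases mul_eq_zero.1 h2 with h | h
    · linarith
    · nlinarith [mul_nonneg hc0 hα.le]
  have hβ4 : β = 4 - c - 4*c*α := by linear_combination 4*hw2
  have hsβ : s*β = 4*s + c*s - 4*c := by linear_combination s*hβ4 - 4*c*hsα
  have goal2 : β = 4 + c * (1 - 4 / s) := by
    rw [hβ4, goal1]
    field_simp
    ring
  refine ⟨goal1, goal2, fun u hu => ?_⟩
  obtain ⟨hu1, hu2⟩ := hu
  have ht1 : u^2 ≤ 1 := by nlinarith
  have ht0 : (0:ℝ) ≤ u^2 := sq_nonneg u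
  constructor
  · -- fs ≤ 0
    have key : s^2 * fs a α u = s^2*(u^2*(u^2-1)*(1-s)^2) := by
      rw [fs_eq, ← hcdef]
      linear_combination (a^2 + c^2 + (1/2)*s*a^2 + s*a^2*α + (1/2)*s*c^2 + s*c^2*α - 2*u^2*a^2 - 2*u^2*c^2 + u^2*s*a^2 - 2*u^2*s*a^2*α + u^2*s*c^2 - 2*u^2*s*c^2*α + u^4*a^2 + u^4*c^2 + (-3/2)*u^4*s*a^2 + u^4*s*a^2*α + (-3/2)*u^4*s*c^2 + u^4*s*c^2*α) * hsα + (1 - 2*u^2 + 2*u^2*s + u^4 - 2*u^4*s + u^4*s^2) * hc2 + (-1 + 2*u^2 - 2*u^2*s + u^2*s^2 - u^4 + 2*u^4*s - u^4*s^2) * hs2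
    have h1u : (0:ℝ) ≤ 1 - u^2 := by linarith
    have hnn : (0:ℝ) ≤ s^2*(u^2*(1-u^2)*(1-s)^2) :=
      mul_nonneg (sq_nonneg s) (mul_nonneg (mul_nonneg (sq_nonneg u) h1u) (sq_nonneg (1-s)))
    have h5 : s^2*(u^2*(u^2-1)*(1-s)^2) ≤ 0 := by
      linarith [hnn, (by ring : s^2*(u^2*(u^2-1)*(1-s)^2) = -(s^2*(u^2*(1-u^2)*(1-s)^2)))]
    have hP : (0:ℝ) < s^2 := by positivity
    have h8 : s^2 * fs a α u ≤ s^2 * 0 := by rw [mul_zero, key]; exact h5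
    exact le_of_mul_le_mul_left h8 hP
  · -- fd ≤ 0
    -- show Q ≥ 0
    have hcs : c^2 = 2*s^2 - 1 := by linear_combination hc2 - 2*hs2
    have hq2le := q2_le s c hshalf hs1 hs0 hc0 hcs
    have hQd : (-2 - 4*s*c + 6*s^2 + 6*u^2 - 4*u^2*s + 8*u^2*s*c - 12*u^2*s^2 - 2*u^2*s^2*c + 4*u^2*s^3 - 4*u^4 + 4*u^4*s - 4*u^4*s*c + 8*u^4*s^2 + 2*u^4*s^2*c - 8*u^4*s^3 + 2*u^4*s^4 : ℝ)
        = 2*(s-c)^2*(1-u^2)^2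
          + u^2*(1-u^2)*(2*(s-c)^2 - (-4 + 4*s - 4*s*c + 8*s^2 + 2*s^2*c - 8*s^3 + 2*s^4))
          + u^2*(2*s^2*(1-s)^2) := by
      linear_combination (1-u^2)*(-2)*hc2 + (1-u^2)*4*hs2
    have hQ : (0:ℝ) ≤ -2 - 4*s*c + 6*s^2 + 6*u^2 - 4*u^2*s + 8*u^2*s*c - 12*u^2*s^2 - 2*u^2*s^2*c + 4*u^2*s^3 - 4*u^4 + 4*u^4*s - 4*u^4*s*c + 8*u^4*s^2 + 2*u^4*s^2*c - 8*u^4*s^3 + 2*u^4*s^4 := by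
      rw [hQd]
      have h1u : (0:ℝ) ≤ 1 - u^2 := by linarith
      have t1 : (0:ℝ) ≤ 2*(s-c)^2*(1-u^2)^2 := by positivity
      have t2 : (0:ℝ) ≤ u^2*(1-u^2)*(2*(s-c)^2 - (-4 + 4*s - 4*s*c + 8*s^2 + 2*s^2*c - 8*s^3 + 2*s^4)) :=
        mul_nonneg (mul_nonneg ht0 h1u) (by linarith [hq2le])
      have t3 : (0:ℝ) ≤ u^2*(2*s^2*(1-s)^2) := by positivity
      exact add_nonneg (add_nonneg t1 t2) t3
    have key2 : s^2 * fd a α β u = (u^2*(u^2-1)) *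
        (-2 - 4*s*c + 6*s^2 + 6*u^2 - 4*u^2*s + 8*u^2*s*c - 12*u^2*s^2 - 2*u^2*s^2*c + 4*u^2*s^3 - 4*u^4 + 4*u^4*s - 4*u^4*s*c + 8*u^4*s^2 + 2*u^4*s^2*c - 8*u^4*s^3 + 2*u^4*s^4) := by
      rw [fd_eq, ← hcdef]
      linear_combination (c^2 + (1/2)*s*c*β + s*c^2*α + 2*u^2*a^2 + u^2*s*a^2 + 2*u^2*s*a^2*α - u^2*s*c*β + u^2*s*c^2 - 4*u^4*a^2 - 2*u^4*c^2 + 2*u^4*s*a^2 - 4*u^4*s*a^2*α + u^4*s*c^2 - 2*u^4*s*c^2*α + 2*u^6*a^2 - 3*u^6*s*a^2 + 2*u^6*s*a^2*α + u^6*s*c*β - u^6*s*c^2 + u^8*c^2 + (-1/2)*u^8*s*c*β - u^8*s*c^2 + u^8*s*c^2*α) * hsα + ((1/4)*c + (1/4)*s + (1/16)*s*β + (-1/16)*s*c - u^2*s + (-1/4)*u^2*s*β + (1/4)*u^2*s*c + (-3/2)*u^4*c + (3/2)*u^4*s + (3/8)*u^4*s*β + (1/8)*u^4*s*c + 2*u^6*c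 - u^6*s + (-1/4)*u^6*s*β + (-3/4)*u^6*s*c + (-3/4)*u^8*c + (1/4)*u^8*s + (1/16)*u^8*s*β + (7/16)*u^8*s*c) * hsβ + (4*u^4 - 8*u^6 + 4*u^6*s + 4*u^8 - 4*u^8*s + u^8*s^2) * hc2 + (2*u^2 - 12*u^4 + 4*u^4*s + 18*u^6 - 12*u^6*s + 2*u^6*s^2 - 8*u^8 + 8*u^8*s - 2*u^8*s^2) * hs2
    have h6 : (u^2*(u^2-1)) *
        (-2 - 4*s*c + 6*s^2 + 6*u^2 - 4*u^2*s + 8*u^2*s*c - 12*u^2*s^2 - 2*u^2*s^2*c + 4*u^2*s^3 - 4*u^4 + 4*u^4*s - 4*u^4*s*c + 8*u^4*s^2 + 2*u^4*s^2*c - 8*u^4*s^3 + 2*u^4*s^4) ≤ 0 := by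
      have h7 : u^2*(u^2-1) ≤ 0 :=
        mul_nonpos_iff.2 (Or.inl ⟨ht0, by linarith⟩)
      exact mul_nonpos_of_nonpos_of_nonneg h7 hQ
    have hP : (0:ℝ) < s^2 := by positivity
    have h8 : s^2 * fd a α β u ≤ s^2 * 0 := by rw [mul_zero, key2]; exact h6
    exact le_of_mul_le_mul_left h8 hP

end
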